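/- For all positive integers m and n, the product Λ_m · Λ_n divides Λ_{mn}, where Λ_k denotes the least common multiple of 1, 2, …, k. -/

import Mathlib

lemma lcm_Icc_ne_zero (k : ℕ) : (Finset.Icc 1 k).lcm id ≠ 0 := by
  rw [Ne, Finset.lcm_eq_zero_iff]
  simp

lemma factorization_lcm_le (p N : ℕ) (s : Finset ℕ)
    (h : ∀ i ∈ s, i ≠ 0 ∧ i.factorization p ≤ N) :
    (s.lcm id).factorization p ≤ N := by
  induction s using Finset.induction_on with
  | empty => simp
  | @insert a s ha ih =>
    rw [Finset.lcm_insert]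
    have ha0 : a ≠ 0 := (h a (Finset.mem_insert_self a s)).1
    have hl0 : s.lcm id ≠ 0 := by
      rw [Ne, Finset.lcm_eq_zero_iff]
      intro hc
      simp only [Set.mem_image, Finset.mem_coe, id] at hc
      obtain ⟨i, hi, hi0⟩ := hc
      exact (h i (Finset.mem_insert_of_mem hi)).1 hi0
    have heq := Nat.factorization_lcm ha0 hl0
    show (Nat.lcm (id a) (s.lcm id)).factorization p ≤ N
    rw [id, heq, Finsupp.sup_apply, sup_le_iff]
    exact ⟨(h a (Finset.mem_insert_self a s)).2,
      ih fun i hi => h i (Finset.mem_insert_of_mem hi)⟩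

lemma factorization_lcm_Icc_le_log {p : ℕ} (hp : p.Prime) (k : ℕ) (hk : 0 < k) :
    ((Finset.Icc 1 k).lcm id).factorization p ≤ Nat.log p k := by
  apply factorization_lcm_le
  intro i hi
  rw [Finset.mem_Icc] at hi
  refine ⟨by omega, ?_⟩
  rw [Nat.le_log_iff_pow_le hp.one_lt (by omega)]
  calc p ^ i.factorization p ≤ i := Nat.le_of_dvd (by omega) (Nat.ordProj_dvd i p)
    _ ≤ k := hi.2

/-- For all positive integers `m` and `n`, `lcm(1,…,m) * lcm(1,…,n)` divides
`lcm(1,…,m*n)`. -/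
theorem lcm_range_mul_dvd (m n : ℕ) (hm : 0 < m) (hn : 0 < n) :
    (Finset.Icc 1 m).lcm id * (Finset.Icc 1 n).lcm id ∣ (Finset.Icc 1 (m * n)).lcm id := by
  have h1 := lcm_Icc_ne_zero m
  have h2 := lcm_Icc_ne_zero n
  have h3 := lcm_Icc_ne_zero (m * n)
  rw [← Nat.factorization_le_iff_dvd (Nat.mul_ne_zero h1 h2) h3]
  rw [Nat.factorization_mul h1 h2]
  intro p
  simp only [Finsupp.coe_add, Pi.add_apply]
  by_cases hp : p.Prime
  · have hm' : ((Finset.Icc 1 m).lcm id).factorization p ≤ Nat.log p m :=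
      factorization_lcm_Icc_le_log hp m hm
    have hn' : ((Finset.Icc 1 n).lcm id).factorization p ≤ Nat.log p n :=
      factorization_lcm_Icc_le_log hp n hn
    have key : Nat.log p m + Nat.log p n ≤ ((Finset.Icc 1 (m * n)).lcm id).factorization p := by
      rw [← Nat.Prime.pow_dvd_iff_le_factorization hp h3, pow_add]
      have hmem : p ^ Nat.log p m * p ^ Nat.log p n ∈ Finset.Icc 1 (m * n) := by
        rw [Finset.mem_Icc]
        exact ⟨Nat.one_le_iff_ne_zero.mpr (Nat.mul_ne_zero (pow_ne_zero _ hp.pos.ne') (pow_ne_zero _ hp.pos.ne')),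
          Nat.mul_le_mul (Nat.pow_log_le_self p hm.ne') (Nat.pow_log_le_self p hn.ne')⟩
      exact Finset.dvd_lcm hmem
    omega
  · simp [Nat.factorization_eq_zero_of_not_prime _ hp]
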